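/- Let p_1, ..., p_m be primes. If there exist positive integers x_1, ..., x_R, each of whose prime divisors lies in {p_1, ..., p_m}, with ∑_{i=1}^R 1/x_i = 1, then gcd(p_1 - 1, ..., p_m - 1) divides R - 1. -/

import Mathlib

lemma aux_one_mod (m : ℕ) (p : Fin m → ℕ) (hp : ∀ j, (p j).Prime) :
    ∀ n : ℕ, 0 < n → (∀ q : ℕ, q.Prime → q ∣ n → ∃ j, q = p j) →
      ((Finset.univ.gcd fun j => p j - 1 : ℕ) : ℤ) ∣ (n : ℤ) - 1 := by
  intro n
  induction n using Nat.strong_induction_on with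
  | _ n ih =>
    intro hn hq
    rcases eq_or_lt_of_le (show 1 ≤ n from hn) with h1 | h1
    · simp [← h1]
    · have hmin : n.minFac.Prime := Nat.minFac_prime (by omega)
      obtain ⟨j, hj⟩ := hq n.minFac hmin (Nat.minFac_dvd n)
      set q := n.minFac with hqdef
      have hqd : q ∣ n := Nat.minFac_dvd n
      obtain ⟨k, hk⟩ := hqd
      have hq2 : 2 ≤ q := hmin.two_le
      have hk0 : 0 < k := by
        rcases Nat.eq_zero_or_pos k with h | h
        · subst h; simp at hk; omega
        · exact h
      have hkn : k < n := by nlinarith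
      have ihk : ((Finset.univ.gcd fun j => p j - 1 : ℕ) : ℤ) ∣ (k : ℤ) - 1 := by
        apply ih k hkn hk0
        intro r hr hrk
        exact hq r hr (hrk.trans ⟨q, by rw [hk, mul_comm]⟩)
      have hgd : (Finset.univ.gcd fun j => p j - 1 : ℕ) ∣ p j - 1 :=
        Finset.gcd_dvd (Finset.mem_univ j)
      have hgdz : ((Finset.univ.gcd fun j => p j - 1 : ℕ) : ℤ) ∣ (q : ℤ) - 1 := by
        have h1p : 1 ≤ p j := (hp j).one_lt.le
        have := Int.natCast_dvd_natCast.mpr hgd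
        rwa [Nat.cast_sub h1p, Nat.cast_one, ← hj] at this
      have key : (n : ℤ) - 1 = ((q : ℤ) - 1) * k + ((k : ℤ) - 1) := by
        have : (n : ℤ) = (q : ℤ) * k := by exact_mod_cast hk
        ring_nf
        linarith
      rw [key]
      exact dvd_add (hgdz.mul_right _) ihk

theorem stmt_1 (m R : ℕ) (p : Fin m → ℕ) (hp : ∀ j, (p j).Prime)
    (x : Fin R → ℕ) (hpos : ∀ i, 0 < x i)
    (hdiv : ∀ i, ∀ q : ℕ, q.Prime → q ∣ x i → ∃ j, q = p j)
    (hsum : ∑ i, ((x i : ℚ))⁻¹ = 1) :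
    (Finset.univ.gcd fun j => p j - 1) ∣ R - 1 := by
  set d := (Finset.univ.gcd fun j => p j - 1 : ℕ) with hd
  have hR : 0 < R := by
    by_contra h
    push_neg at h
    interval_cases R
    simp at hsum
  -- N = product of all x i
  set N : ℕ := ∏ i, x i with hN
  set y : Fin R → ℕ := fun i => ∏ j ∈ Finset.univ.erase i, x j with hy
  have hyx : ∀ i, y i * x i = N := by
    intro i
    rw [hy, hN, mul_comm, ← Finset.mul_prod_erase Finset.univ x (Finset.mem_univ i)]
  have hN0 : 0 < N := Finset.prod_pos fun i _ => hpos i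
  -- sum of y i = N
  have hsumy : (∑ i, y i) = N := by
    have : ((∑ i, y i : ℕ) : ℚ) = (N : ℚ) := by
      push_cast
      have : ∀ i : Fin R, (y i : ℚ) = (N : ℚ) * ((x i : ℚ))⁻¹ := by
        intro i
        have hxi : (x i : ℚ) ≠ 0 := by
          exact_mod_cast (hpos i).ne'
        field_simp
        exact_mod_cast (hyx i)
      calc (∑ i, (y i : ℚ)) = ∑ i, (N : ℚ) * ((x i : ℚ))⁻¹ := by
            exact Finset.sum_congr rfl fun i _ => this i
        _ = (N : ℚ) * ∑ i, ((x i : ℚ))⁻¹ := by rw [Finset.mul_sum]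
        _ = (N : ℚ) := by rw [hsum, mul_one]
    exact_mod_cast this
  -- divisibility facts
  have hdvdx : ∀ n : ℕ, 0 < n → (∀ q : ℕ, q.Prime → q ∣ n → ∃ j, q = p j) →
      (d : ℤ) ∣ (n : ℤ) - 1 := aux_one_mod m p hp
  have hdN : (d : ℤ) ∣ (N : ℤ) - 1 := by
    apply hdvdx N hN0
    intro q hq hqN
    obtain ⟨i, _, hi⟩ := hq.prime.exists_mem_finset_dvd (by rwa [hN] at hqN)
    exact hdiv i q hq hi
  have hdy : ∀ i, (d : ℤ) ∣ (y i : ℤ) - 1 := by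
    intro i
    apply hdvdx (y i) (Finset.prod_pos fun j _ => hpos j)
    intro q hq hqy
    obtain ⟨j', _, hj'⟩ := hq.prime.exists_mem_finset_dvd hqy
    exact hdiv j' q hq hj'
  have hsy : (d : ℤ) ∣ (∑ i, ((y i : ℤ) - 1)) := Finset.dvd_sum fun i _ => hdy i
  have hRd : (d : ℤ) ∣ (R : ℤ) - 1 := by
    have heq : (R : ℤ) - 1 = ((N : ℤ) - 1) - (∑ i, ((y i : ℤ) - 1)) := by
      have h1 : (∑ i, ((y i : ℤ) - 1)) = (∑ i, (y i : ℤ)) - R := by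
        rw [Finset.sum_sub_distrib]
        simp
      have h2 : (∑ i, (y i : ℤ)) = (N : ℤ) := by exact_mod_cast hsumy
      rw [h1, h2]; ring
    rw [heq]
    exact dvd_sub hdN hsy
  have h3 : ((R - 1 : ℕ) : ℤ) = (R : ℤ) - 1 := by
    rw [Nat.cast_sub hR, Nat.cast_one]
  exact Int.ofNat_dvd.mp (by rw [h3]; exact hRd)
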